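/- Under M ⊥ R | X, Y, G=1, the normalized odds ratio õR(x,y) = OR(x,y)/E[OR(X,Y) | R=1, X=x, G=1] satisfies the integral equation E[õR(X,Y) | R=1, X=x, M=m, G=1] = p(M=m | X=x, R=0, G=1) / p(M=m | X=x, R=1, G=1) for all x, m. -/

import Mathlib

open Finset Set Real

noncomputable def Pr {Ω : Type*} [Fintype Ω] (μ : Ω → ℝ) (A : Set Ω) : ℝ :=
  ∑ ω, A.indicator μ ω

noncomputable def cPr {Ω : Type*} [Fintype Ω] (μ : Ω → ℝ) (A B : Set Ω) : ℝ :=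
  Pr μ (A ∩ B) / Pr μ B

noncomputable def cE {Ω : Type*} [Fintype Ω] (μ : Ω → ℝ) (f : Ω → ℝ) (B : Set Ω) : ℝ :=
  (∑ ω, B.indicator (fun ω' => μ ω' * f ω') ω) / Pr μ B

noncomputable def OddsR {Ω 𝓧 : Type*} [Fintype Ω] (μ : Ω → ℝ) (X : Ω → 𝓧) (Y : Ω → ℝ)
    (R G : Ω → ℕ) (x : 𝓧) (y : ℝ) : ℝ :=
  (cPr μ {ω | R ω = 0} {ω | X ω = x ∧ Y ω = y ∧ G ω = 1} *
      cPr μ {ω | R ω = 1} {ω | X ω = x ∧ Y ω = 0 ∧ G ω = 1}) /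
  (cPr μ {ω | R ω = 1} {ω | X ω = x ∧ Y ω = y ∧ G ω = 1} *
      cPr μ {ω | R ω = 0} {ω | X ω = x ∧ Y ω = 0 ∧ G ω = 1})

section Aux

variable {Ω : Type*} [Fintype Ω] (μ : Ω → ℝ)

open Classical in
lemma Pr_eq_sum_filter (A : Set Ω) :
    Pr μ A = ∑ ω ∈ Finset.univ.filter (fun ω => ω ∈ A), μ ω := by
  rw [Pr, Finset.sum_filter]
  exact Finset.sum_congr rfl fun ω _ => by simp [Set.indicator_apply]

lemma Pr_mono (hμ0 : ∀ ω, 0 ≤ μ ω) {A B : Set Ω} (h : A ⊆ B) : Pr μ A ≤ Pr μ B := by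
  classical
  rw [Pr_eq_sum_filter, Pr_eq_sum_filter]
  apply Finset.sum_le_sum_of_subset_of_nonneg
  · intro ω hω
    simp only [Finset.mem_filter] at *
    exact ⟨hω.1, h hω.2⟩
  · intro ω _ _
    exact hμ0 ω

lemma odds_mul_eq (a0 a1 b0 b1 p q w0 w1 : ℝ) (hp : p ≠ 0) (hq : q ≠ 0)
    (ha1 : a1 ≠ 0) (hb0 : b0 ≠ 0) (hw : a0 * w1 = a1 * w0) :
    (a0 / p * (b1 / q)) / (a1 / p * (b0 / q)) * w1 = b1 / b0 * w0 := by
  field_simp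
  linear_combination b1 * hw

lemma ci_prod (Q Mm N p : ℝ) (hp : p ≠ 0) (h : Q / p = Mm / p * (N / p)) : Q * p = Mm * N := by
  field_simp at h
  exact mul_right_cancel₀ hp (by linear_combination p * h)

/-- Grouping a weighted sum by the value of `Y`. -/
lemma group_by_Y (Y : Ω → ℝ) (B : Set Ω) (g : ℝ → ℝ) :
    ∑ ω, B.indicator (fun ω' => μ ω' * g (Y ω')) ω =
      ∑ y ∈ Finset.univ.image Y, Pr μ (B ∩ {ω | Y ω = y}) * g y := by
  classical
  calc ∑ ω, B.indicator (fun ω' => μ ω' * g (Y ω')) ω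
      = ∑ ω, ∑ y ∈ Finset.univ.image Y,
          (B ∩ {ω' | Y ω' = y}).indicator μ ω * g y := by
        refine Finset.sum_congr rfl fun ω _ => ?_
        rw [Finset.sum_eq_single_of_mem (Y ω)
          (Finset.mem_image_of_mem Y (Finset.mem_univ ω))]
        · by_cases hω : ω ∈ B
          · rw [Set.indicator_of_mem hω, Set.indicator_of_mem (show ω ∈ B ∩ {ω' | Y ω' = Y ω} from ⟨hω, rfl⟩)]
          · rw [Set.indicator_of_notMem hω,
              Set.indicator_of_notMem (fun hc => hω hc.1), zero_mul]
        · intro b _ hb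
          rw [Set.indicator_of_notMem (fun hc => hb hc.2.symm), zero_mul]
      _ = ∑ y ∈ Finset.univ.image Y, ∑ ω, (B ∩ {ω' | Y ω' = y}).indicator μ ω * g y :=
        Finset.sum_comm
      _ = ∑ y ∈ Finset.univ.image Y, Pr μ (B ∩ {ω | Y ω = y}) * g y := by
        refine Finset.sum_congr rfl fun y _ => ?_
        rw [Pr, Finset.sum_mul]

/-- Total probability over the fibers of `Y`. -/
lemma total_by_Y (Y : Ω → ℝ) (A : Set Ω) :
    ∑ y ∈ Finset.univ.image Y, Pr μ (A ∩ {ω | Y ω = y}) = Pr μ A := by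
  have h := group_by_Y μ Y A (fun _ => 1)
  simp only [mul_one] at h
  rw [← h, Pr]

end Aux

theorem stmt8
    {Ω 𝓧 𝓜 : Type*} [Fintype Ω]
    (μ : Ω → ℝ) (X : Ω → 𝓧) (M : Ω → 𝓜) (Y : Ω → ℝ) (R G : Ω → ℕ)
    (hμ0 : ∀ ω, 0 ≤ μ ω) (hμ1 : ∑ ω, μ ω = 1)
    (hR : ∀ ω, R ω = 0 ∨ R ω = 1)
    (h0Y : (0 : ℝ) ∈ Set.range Y)
    (hpos : ∀ x ∈ Set.range X, ∀ m ∈ Set.range M, ∀ y ∈ Set.range Y, ∀ r : ℕ,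
      (r = 0 ∨ r = 1) →
      0 < Pr μ {ω | X ω = x ∧ M ω = m ∧ Y ω = y ∧ R ω = r ∧ G ω = 1})
    (hCI : ∀ (m : 𝓜) (r : ℕ) (x : 𝓧) (y : ℝ),
      0 < Pr μ {ω | X ω = x ∧ Y ω = y ∧ G ω = 1} →
      cPr μ {ω | M ω = m ∧ R ω = r} {ω | X ω = x ∧ Y ω = y ∧ G ω = 1} =
        cPr μ {ω | M ω = m} {ω | X ω = x ∧ Y ω = y ∧ G ω = 1} *
        cPr μ {ω | R ω = r} {ω | X ω = x ∧ Y ω = y ∧ G ω = 1})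
 :
    ∀ x ∈ Set.range X, ∀ m ∈ Set.range M,
      cE μ (fun ω =>
          OddsR μ X Y R G (X ω) (Y ω) /
            cE μ (fun ω' => OddsR μ X Y R G (X ω') (Y ω'))
              {ω' | R ω' = 1 ∧ X ω' = X ω ∧ G ω' = 1})
        {ω | R ω = 1 ∧ X ω = x ∧ M ω = m ∧ G ω = 1} =
      cPr μ {ω | M ω = m} {ω | X ω = x ∧ R ω = 0 ∧ G ω = 1} /
        cPr μ {ω | M ω = m} {ω | X ω = x ∧ R ω = 1 ∧ G ω = 1} := by
  intro x hx m hm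
  have hmemt : ∀ y ∈ Finset.univ.image Y, y ∈ Set.range Y := by
    intro y hy
    obtain ⟨ω, -, hω⟩ := Finset.mem_image.mp hy
    exact ⟨ω, hω⟩
  -- positivity of pointwise probabilities
  have hPpos : ∀ y ∈ Set.range Y, 0 < Pr μ {ω | X ω = x ∧ Y ω = y ∧ G ω = 1} := by
    intro y hy
    refine lt_of_lt_of_le (hpos x hx m hm y hy 1 (Or.inr rfl)) (Pr_mono μ hμ0 ?_)
    intro ω hω
    simp only [Set.mem_setOf_eq] at * <;> tauto
  have hNpos : ∀ r : ℕ, (r = 0 ∨ r = 1) → ∀ y ∈ Set.range Y,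
      0 < Pr μ ({ω | R ω = r} ∩ {ω | X ω = x ∧ Y ω = y ∧ G ω = 1}) := by
    intro r hr y hy
    refine lt_of_lt_of_le (hpos x hx m hm y hy r hr) (Pr_mono μ hμ0 ?_)
    intro ω hω
    simp only [Set.mem_setOf_eq, Set.mem_inter_iff] at * <;> tauto
  have hQpos : ∀ r : ℕ, (r = 0 ∨ r = 1) → ∀ y ∈ Set.range Y,
      0 < Pr μ ({ω | M ω = m ∧ R ω = r} ∩ {ω | X ω = x ∧ Y ω = y ∧ G ω = 1}) := by
    intro r hr y hy
    refine lt_of_lt_of_le (hpos x hx m hm y hy r hr) (Pr_mono μ hμ0 ?_)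
    intro ω hω
    simp only [Set.mem_setOf_eq, Set.mem_inter_iff] at * <;> tauto
  -- CI in product form
  have hQeq : ∀ r : ℕ, ∀ y ∈ Set.range Y,
      Pr μ ({ω | M ω = m ∧ R ω = r} ∩ {ω | X ω = x ∧ Y ω = y ∧ G ω = 1}) *
        Pr μ {ω | X ω = x ∧ Y ω = y ∧ G ω = 1} =
      Pr μ ({ω | M ω = m} ∩ {ω | X ω = x ∧ Y ω = y ∧ G ω = 1}) *
        Pr μ ({ω | R ω = r} ∩ {ω | X ω = x ∧ Y ω = y ∧ G ω = 1}) := by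
    intro r y hy
    have h := hCI m r x y (hPpos y hy)
    rw [cPr, cPr, cPr] at h
    exact ci_prod _ _ _ _ (hPpos y hy).ne' h
  -- pointwise identity 1 : OR(x,y) * N1(y) = (az1/az0) * N0(y)
  have hptN : ∀ y ∈ Set.range Y,
      OddsR μ X Y R G x y *
        Pr μ ({ω | R ω = 1} ∩ {ω | X ω = x ∧ Y ω = y ∧ G ω = 1}) =
      Pr μ ({ω | R ω = 1} ∩ {ω | X ω = x ∧ Y ω = (0:ℝ) ∧ G ω = 1}) /
        Pr μ ({ω | R ω = 0} ∩ {ω | X ω = x ∧ Y ω = (0:ℝ) ∧ G ω = 1}) *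
        Pr μ ({ω | R ω = 0} ∩ {ω | X ω = x ∧ Y ω = y ∧ G ω = 1}) := by
    intro y hy
    rw [OddsR, cPr, cPr, cPr, cPr]
    exact odds_mul_eq _ _ _ _ _ _ _ _ (hPpos y hy).ne' (hPpos 0 h0Y).ne'
      (hNpos 1 (Or.inr rfl) y hy).ne' (hNpos 0 (Or.inl rfl) 0 h0Y).ne' (mul_comm _ _)
  -- pointwise identity 2 : OR(x,y) * Q1(y) = (az1/az0) * Q0(y)
  have hptQ : ∀ y ∈ Set.range Y,
      OddsR μ X Y R G x y *
        Pr μ ({ω | M ω = m ∧ R ω = 1} ∩ {ω | X ω = x ∧ Y ω = y ∧ G ω = 1}) =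
      Pr μ ({ω | R ω = 1} ∩ {ω | X ω = x ∧ Y ω = (0:ℝ) ∧ G ω = 1}) /
        Pr μ ({ω | R ω = 0} ∩ {ω | X ω = x ∧ Y ω = (0:ℝ) ∧ G ω = 1}) *
        Pr μ ({ω | M ω = m ∧ R ω = 0} ∩ {ω | X ω = x ∧ Y ω = y ∧ G ω = 1}) := by
    intro y hy
    have h1 := hQeq 1 y hy
    have h0 := hQeq 0 y hy
    have hw : Pr μ ({ω | R ω = 0} ∩ {ω | X ω = x ∧ Y ω = y ∧ G ω = 1}) *
        Pr μ ({ω | M ω = m ∧ R ω = 1} ∩ {ω | X ω = x ∧ Y ω = y ∧ G ω = 1}) =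
        Pr μ ({ω | R ω = 1} ∩ {ω | X ω = x ∧ Y ω = y ∧ G ω = 1}) *
        Pr μ ({ω | M ω = m ∧ R ω = 0} ∩ {ω | X ω = x ∧ Y ω = y ∧ G ω = 1}) := by
      refine mul_right_cancel₀ (hPpos y hy).ne' ?_
      linear_combination Pr μ ({ω | R ω = 0} ∩ {ω | X ω = x ∧ Y ω = y ∧ G ω = 1}) * h1 -
        Pr μ ({ω | R ω = 1} ∩ {ω | X ω = x ∧ Y ω = y ∧ G ω = 1}) * h0
    rw [OddsR, cPr, cPr, cPr, cPr]
    exact odds_mul_eq _ _ _ _ _ _ _ _ (hPpos y hy).ne' (hPpos 0 h0Y).ne'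
      (hNpos 1 (Or.inr rfl) y hy).ne' (hNpos 0 (Or.inl rfl) 0 h0Y).ne' hw
  -- total sums
  have hNtot : ∀ r : ℕ,
      ∑ y ∈ Finset.univ.image Y,
        Pr μ ({ω | R ω = r} ∩ {ω | X ω = x ∧ Y ω = y ∧ G ω = 1}) =
      Pr μ {ω | X ω = x ∧ R ω = r ∧ G ω = 1} := by
    intro r
    rw [← total_by_Y μ Y {ω | X ω = x ∧ R ω = r ∧ G ω = 1}]
    refine Finset.sum_congr rfl fun y _ => congrArg (Pr μ) ?_
    ext ω
    simp only [Set.mem_inter_iff, Set.mem_setOf_eq] <;> tauto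
  have hQtot : ∀ r : ℕ,
      ∑ y ∈ Finset.univ.image Y,
        Pr μ ({ω | M ω = m ∧ R ω = r} ∩ {ω | X ω = x ∧ Y ω = y ∧ G ω = 1}) =
      Pr μ ({ω | M ω = m} ∩ {ω | X ω = x ∧ R ω = r ∧ G ω = 1}) := by
    intro r
    rw [← total_by_Y μ Y ({ω | M ω = m} ∩ {ω | X ω = x ∧ R ω = r ∧ G ω = 1})]
    refine Finset.sum_congr rfl fun y _ => congrArg (Pr μ) ?_
    ext ω
    simp only [Set.mem_inter_iff, Set.mem_setOf_eq] <;> tauto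
  -- positivity of totals
  have hntpos : ∀ r : ℕ, (r = 0 ∨ r = 1) → 0 < Pr μ {ω | X ω = x ∧ R ω = r ∧ G ω = 1} := by
    intro r hr
    refine lt_of_lt_of_le (hNpos r hr 0 h0Y) (Pr_mono μ hμ0 ?_)
    intro ω hω
    simp only [Set.mem_setOf_eq, Set.mem_inter_iff] at * <;> tauto
  have hqtpos : ∀ r : ℕ, (r = 0 ∨ r = 1) →
      0 < Pr μ ({ω | M ω = m} ∩ {ω | X ω = x ∧ R ω = r ∧ G ω = 1}) := by
    intro r hr
    refine lt_of_lt_of_le (hQpos r hr 0 h0Y) (Pr_mono μ hμ0 ?_)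
    intro ω hω
    simp only [Set.mem_setOf_eq, Set.mem_inter_iff] at * <;> tauto
  -- value of the inner conditional expectation
  have hDnum : ∑ ω, Set.indicator {ω' | R ω' = 1 ∧ X ω' = x ∧ G ω' = 1}
      (fun ω'' => μ ω'' * (fun ω' => OddsR μ X Y R G (X ω') (Y ω')) ω'') ω =
      Pr μ ({ω | R ω = 1} ∩ {ω | X ω = x ∧ Y ω = (0:ℝ) ∧ G ω = 1}) /
        Pr μ ({ω | R ω = 0} ∩ {ω | X ω = x ∧ Y ω = (0:ℝ) ∧ G ω = 1}) *
        Pr μ {ω | X ω = x ∧ R ω = 0 ∧ G ω = 1} := by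
    calc ∑ ω, Set.indicator {ω' | R ω' = 1 ∧ X ω' = x ∧ G ω' = 1}
          (fun ω'' => μ ω'' * (fun ω' => OddsR μ X Y R G (X ω') (Y ω')) ω'') ω
        = ∑ ω, Set.indicator {ω' | R ω' = 1 ∧ X ω' = x ∧ G ω' = 1}
            (fun ω'' => μ ω'' * OddsR μ X Y R G x (Y ω'')) ω := by
          refine Finset.sum_congr rfl fun ω _ => ?_
          by_cases hω : ω ∈ {ω' | R ω' = 1 ∧ X ω' = x ∧ G ω' = 1}
          · rw [Set.indicator_of_mem hω, Set.indicator_of_mem hω]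
            have hX : X ω = x := hω.2.1
            show μ ω * OddsR μ X Y R G (X ω) (Y ω) = μ ω * OddsR μ X Y R G x (Y ω)
            rw [hX]
          · rw [Set.indicator_of_notMem hω, Set.indicator_of_notMem hω]
      _ = ∑ y ∈ Finset.univ.image Y,
            Pr μ ({ω' | R ω' = 1 ∧ X ω' = x ∧ G ω' = 1} ∩ {ω | Y ω = y}) *
              OddsR μ X Y R G x y :=
          group_by_Y μ Y _ (fun y => OddsR μ X Y R G x y)
      _ = ∑ y ∈ Finset.univ.image Y,
            Pr μ ({ω | R ω = 1} ∩ {ω | X ω = x ∧ Y ω = y ∧ G ω = 1}) *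
              OddsR μ X Y R G x y := by
          refine Finset.sum_congr rfl fun y _ => ?_
          congr 1
          refine congrArg (Pr μ) ?_
          ext ω
          simp only [Set.mem_inter_iff, Set.mem_setOf_eq] <;> tauto
      _ = ∑ y ∈ Finset.univ.image Y,
            Pr μ ({ω | R ω = 1} ∩ {ω | X ω = x ∧ Y ω = (0:ℝ) ∧ G ω = 1}) /
              Pr μ ({ω | R ω = 0} ∩ {ω | X ω = x ∧ Y ω = (0:ℝ) ∧ G ω = 1}) *
              Pr μ ({ω | R ω = 0} ∩ {ω | X ω = x ∧ Y ω = y ∧ G ω = 1}) := by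
          refine Finset.sum_congr rfl fun y hy => ?_
          rw [mul_comm]
          exact hptN y (hmemt y hy)
      _ = _ := by
          rw [← Finset.mul_sum, hNtot 0]
  have hDden : Pr μ {ω' | R ω' = 1 ∧ X ω' = x ∧ G ω' = 1} =
      Pr μ {ω | X ω = x ∧ R ω = 1 ∧ G ω = 1} := by
    refine congrArg (Pr μ) ?_
    ext ω
    simp only [Set.mem_setOf_eq] <;> tauto
  have hDval : cE μ (fun ω' => OddsR μ X Y R G (X ω') (Y ω'))
      {ω' | R ω' = 1 ∧ X ω' = x ∧ G ω' = 1} =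
      Pr μ ({ω | R ω = 1} ∩ {ω | X ω = x ∧ Y ω = (0:ℝ) ∧ G ω = 1}) /
        Pr μ ({ω | R ω = 0} ∩ {ω | X ω = x ∧ Y ω = (0:ℝ) ∧ G ω = 1}) *
        Pr μ {ω | X ω = x ∧ R ω = 0 ∧ G ω = 1} /
        Pr μ {ω | X ω = x ∧ R ω = 1 ∧ G ω = 1} := by
    rw [cE, hDnum, hDden]
  -- numerator of the outer conditional expectation
  have hnum : ∑ ω, Set.indicator {ω | R ω = 1 ∧ X ω = x ∧ M ω = m ∧ G ω = 1}
      (fun ω'' => μ ω'' * (fun ω =>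
          OddsR μ X Y R G (X ω) (Y ω) /
            cE μ (fun ω' => OddsR μ X Y R G (X ω') (Y ω'))
              {ω' | R ω' = 1 ∧ X ω' = X ω ∧ G ω' = 1}) ω'') ω =
      Pr μ ({ω | R ω = 1} ∩ {ω | X ω = x ∧ Y ω = (0:ℝ) ∧ G ω = 1}) /
        Pr μ ({ω | R ω = 0} ∩ {ω | X ω = x ∧ Y ω = (0:ℝ) ∧ G ω = 1}) *
        Pr μ ({ω | M ω = m} ∩ {ω | X ω = x ∧ R ω = 0 ∧ G ω = 1}) /
      (Pr μ ({ω | R ω = 1} ∩ {ω | X ω = x ∧ Y ω = (0:ℝ) ∧ G ω = 1}) /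
        Pr μ ({ω | R ω = 0} ∩ {ω | X ω = x ∧ Y ω = (0:ℝ) ∧ G ω = 1}) *
        Pr μ {ω | X ω = x ∧ R ω = 0 ∧ G ω = 1} /
        Pr μ {ω | X ω = x ∧ R ω = 1 ∧ G ω = 1}) := by
    calc ∑ ω, Set.indicator {ω | R ω = 1 ∧ X ω = x ∧ M ω = m ∧ G ω = 1}
          (fun ω'' => μ ω'' * (fun ω =>
              OddsR μ X Y R G (X ω) (Y ω) /
                cE μ (fun ω' => OddsR μ X Y R G (X ω') (Y ω'))
                  {ω' | R ω' = 1 ∧ X ω' = X ω ∧ G ω' = 1}) ω'') ω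
        = ∑ ω, Set.indicator {ω | R ω = 1 ∧ X ω = x ∧ M ω = m ∧ G ω = 1}
            (fun ω'' => μ ω'' *
              (OddsR μ X Y R G x (Y ω'') /
                (Pr μ ({ω | R ω = 1} ∩ {ω | X ω = x ∧ Y ω = (0:ℝ) ∧ G ω = 1}) /
                  Pr μ ({ω | R ω = 0} ∩ {ω | X ω = x ∧ Y ω = (0:ℝ) ∧ G ω = 1}) *
                  Pr μ {ω | X ω = x ∧ R ω = 0 ∧ G ω = 1} /
                  Pr μ {ω | X ω = x ∧ R ω = 1 ∧ G ω = 1}))) ω := by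
          refine Finset.sum_congr rfl fun ω _ => ?_
          by_cases hω : ω ∈ {ω | R ω = 1 ∧ X ω = x ∧ M ω = m ∧ G ω = 1}
          · rw [Set.indicator_of_mem hω, Set.indicator_of_mem hω]
            have hX : X ω = x := hω.2.1
            show μ ω * (OddsR μ X Y R G (X ω) (Y ω) /
                cE μ (fun ω' => OddsR μ X Y R G (X ω') (Y ω'))
                  {ω' | R ω' = 1 ∧ X ω' = X ω ∧ G ω' = 1}) = _
            rw [hX, hDval]
          · rw [Set.indicator_of_notMem hω, Set.indicator_of_notMem hω]
      _ = ∑ y ∈ Finset.univ.image Y,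
            Pr μ ({ω | R ω = 1 ∧ X ω = x ∧ M ω = m ∧ G ω = 1} ∩ {ω | Y ω = y}) *
              (OddsR μ X Y R G x y /
                (Pr μ ({ω | R ω = 1} ∩ {ω | X ω = x ∧ Y ω = (0:ℝ) ∧ G ω = 1}) /
                  Pr μ ({ω | R ω = 0} ∩ {ω | X ω = x ∧ Y ω = (0:ℝ) ∧ G ω = 1}) *
                  Pr μ {ω | X ω = x ∧ R ω = 0 ∧ G ω = 1} /
                  Pr μ {ω | X ω = x ∧ R ω = 1 ∧ G ω = 1})) :=
          group_by_Y μ Y _ (fun y => OddsR μ X Y R G x y /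
            (Pr μ ({ω | R ω = 1} ∩ {ω | X ω = x ∧ Y ω = (0:ℝ) ∧ G ω = 1}) /
              Pr μ ({ω | R ω = 0} ∩ {ω | X ω = x ∧ Y ω = (0:ℝ) ∧ G ω = 1}) *
              Pr μ {ω | X ω = x ∧ R ω = 0 ∧ G ω = 1} /
              Pr μ {ω | X ω = x ∧ R ω = 1 ∧ G ω = 1}))
      _ = ∑ y ∈ Finset.univ.image Y,
            Pr μ ({ω | M ω = m ∧ R ω = 1} ∩ {ω | X ω = x ∧ Y ω = y ∧ G ω = 1}) *
              (OddsR μ X Y R G x y /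
                (Pr μ ({ω | R ω = 1} ∩ {ω | X ω = x ∧ Y ω = (0:ℝ) ∧ G ω = 1}) /
                  Pr μ ({ω | R ω = 0} ∩ {ω | X ω = x ∧ Y ω = (0:ℝ) ∧ G ω = 1}) *
                  Pr μ {ω | X ω = x ∧ R ω = 0 ∧ G ω = 1} /
                  Pr μ {ω | X ω = x ∧ R ω = 1 ∧ G ω = 1})) := by
          refine Finset.sum_congr rfl fun y _ => ?_
          congr 1
          refine congrArg (Pr μ) ?_
          ext ω
          simp only [Set.mem_inter_iff, Set.mem_setOf_eq] <;> tauto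
      _ = ∑ y ∈ Finset.univ.image Y,
            Pr μ ({ω | R ω = 1} ∩ {ω | X ω = x ∧ Y ω = (0:ℝ) ∧ G ω = 1}) /
              Pr μ ({ω | R ω = 0} ∩ {ω | X ω = x ∧ Y ω = (0:ℝ) ∧ G ω = 1}) *
              Pr μ ({ω | M ω = m ∧ R ω = 0} ∩ {ω | X ω = x ∧ Y ω = y ∧ G ω = 1}) /
              (Pr μ ({ω | R ω = 1} ∩ {ω | X ω = x ∧ Y ω = (0:ℝ) ∧ G ω = 1}) /
                Pr μ ({ω | R ω = 0} ∩ {ω | X ω = x ∧ Y ω = (0:ℝ) ∧ G ω = 1}) *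
                Pr μ {ω | X ω = x ∧ R ω = 0 ∧ G ω = 1} /
                Pr μ {ω | X ω = x ∧ R ω = 1 ∧ G ω = 1}) := by
          refine Finset.sum_congr rfl fun y hy => ?_
          rw [← hptQ y (hmemt y hy)]
          ring
      _ = _ := by
          rw [← Finset.sum_div, ← Finset.mul_sum, hQtot 0]
  have hdenB : Pr μ {ω | R ω = 1 ∧ X ω = x ∧ M ω = m ∧ G ω = 1} =
      Pr μ ({ω | M ω = m} ∩ {ω | X ω = x ∧ R ω = 1 ∧ G ω = 1}) := by
    refine congrArg (Pr μ) ?_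
    ext ω
    simp only [Set.mem_setOf_eq, Set.mem_inter_iff] <;> tauto
  rw [cE, cPr, cPr, hnum, hdenB]
  have haz1 := (hNpos 1 (Or.inr rfl) 0 h0Y).ne'
  have haz0 := (hNpos 0 (Or.inl rfl) 0 h0Y).ne'
  have hnt0 := (hntpos 0 (Or.inl rfl)).ne'
  have hnt1 := (hntpos 1 (Or.inr rfl)).ne'
  have hqt0 := (hqtpos 0 (Or.inl rfl)).ne'
  have hqt1 := (hqtpos 1 (Or.inr rfl)).ne'
  field_simp
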